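/- (Generalized Newton–Maclaurin inequality) Let λ ∈ Γ_k and let integers k, l, r, s satisfy k > l ≥ 0, r > s ≥ 0, k ≥ r, and l ≥ s. Then ( (σ_k(λ)/C_n^k) / (σ_l(λ)/C_n^l) )^{1/(k−l)} ≤ ( (σ_r(λ)/C_n^r) / (σ_s(λ)/C_n^s) )^{1/(r−s)}. -/

import Mathlib

open Finset

/-- The `k`-th elementary symmetric function of the entries of `lam` indexed by `s`. -/
noncomputable def esymmOn {n : ℕ} (s : Finset (Fin n)) (k : ℕ) (lam : Fin n → ℝ) : ℝ :=
  ∑ S ∈ s.powersetCard k, ∏ i ∈ S, lam i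

/-- `σ_k(λ)`. -/
noncomputable def esymm {n : ℕ} (k : ℕ) (lam : Fin n → ℝ) : ℝ :=
  esymmOn Finset.univ k lam

/-- `σ_k(λ|i)`: the `k`-th elementary symmetric function with the `i`-th entry deleted. -/
noncomputable def esymmDel {n : ℕ} (i : Fin n) (k : ℕ) (lam : Fin n → ℝ) : ℝ :=
  esymmOn (Finset.univ.erase i) k lam

/-- `σ_k(λ|ij)`: the `k`-th elementary symmetric function with the `i`-th and `j`-th
entries deleted. -/
noncomputable def esymmDel2 {n : ℕ} (i j : Fin n) (k : ℕ) (lam : Fin n → ℝ) : ℝ :=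
  esymmOn ((Finset.univ.erase i).erase j) k lam

/-- The Gårding cone `Γ_k`: all `λ` with `σ_i(λ) > 0` for `1 ≤ i ≤ k`. -/
def GardingCone (n k : ℕ) : Set (Fin n → ℝ) :=
  {lam | ∀ i : ℕ, 1 ≤ i → i ≤ k → 0 < esymm i lam}

open Polynomial

lemma sum_esymmOn_erase {N : ℕ} (s : Finset (Fin N)) (j : ℕ) (g : Fin N → ℝ) :
    ∑ i ∈ s, esymmOn (s.erase i) j g = ((s.card - j : ℕ) : ℝ) * esymmOn s j g := by
  have h1 : ∀ i ∈ s, esymmOn (s.erase i) j g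
      = ∑ S ∈ (s.powersetCard j).filter (fun S => i ∉ S), ∏ x ∈ S, g x := by
    intro i _
    rw [esymmOn]
    congr 1
    ext S
    simp only [mem_powersetCard, mem_filter, Finset.subset_erase]
    tauto
  calc ∑ i ∈ s, esymmOn (s.erase i) j g
      = ∑ i ∈ s, ∑ S ∈ s.powersetCard j, if i ∉ S then ∏ x ∈ S, g x else 0 := by
        refine Finset.sum_congr rfl fun i hi => ?_
        rw [h1 i hi, Finset.sum_filter]
    _ = ∑ S ∈ s.powersetCard j, ∑ i ∈ s, if i ∉ S then ∏ x ∈ S, g x else 0 :=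
        Finset.sum_comm
    _ = ∑ S ∈ s.powersetCard j, ((s.card - j : ℕ) : ℝ) * ∏ x ∈ S, g x := by
        refine Finset.sum_congr rfl fun S hS => ?_
        rw [mem_powersetCard] at hS
        rw [← Finset.sum_filter, Finset.sum_const, ← Finset.sdiff_eq_filter,
          Finset.card_sdiff_of_subset hS.1, hS.2, nsmul_eq_mul]
    _ = ((s.card - j : ℕ) : ℝ) * esymmOn s j g := by
        rw [esymmOn, Finset.mul_sum]

lemma esymmOn_card {N : ℕ} (s : Finset (Fin N)) (g : Fin N → ℝ) :
    esymmOn s s.card g = ∏ i ∈ s, g i := by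
  rw [esymmOn, Finset.powersetCard_self, Finset.sum_singleton]

lemma lemmaA (d : ℕ) (hd : 2 ≤ d) (g : Fin d → ℝ) :
    2 * (d : ℝ)^2 * (esymm (d-2) g * esymm d g)
      ≤ (d : ℝ) * ((d : ℝ) - 1) * (esymm (d-1) g)^2 := by
  obtain ⟨e, rfl⟩ : ∃ e, d = e + 2 := ⟨d - 2, by omega⟩
  have hcard : (univ : Finset (Fin (e+2))).card = e + 2 := by simp
  set A : Fin (e+2) → ℝ := fun i => ∏ j ∈ univ.erase i, g j with hA_def
  have hP : esymm (e+2) g = ∏ i, g i := by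
    have h := esymmOn_card (univ : Finset (Fin (e+2))) g
    rw [hcard] at h
    rw [esymm]; exact h
  have hcard_erase : ∀ i : Fin (e+2), (univ.erase i).card = e + 1 := by
    intro i
    rw [Finset.card_erase_of_mem (mem_univ i), hcard]
    omega

  have hA : esymm (e+1) g = ∑ i, A i := by
    have h := sum_esymmOn_erase (univ : Finset (Fin (e+2))) (e+1) g
    rw [hcard, show e + 2 - (e+1) = 1 from by omega] at h
    rw [esymm]
    have : ∀ i ∈ (univ : Finset (Fin (e+2))), esymmOn (univ.erase i) (e+1) g = A i := by
      intro i _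
      rw [hA_def, ← hcard_erase i, esymmOn_card]
    rw [Finset.sum_congr rfl this] at h
    push_cast at h
    linarith [h]
  have h2 : 2 * esymm e g = ∑ i, ∑ j ∈ univ.erase i, ∏ x ∈ (univ.erase i).erase j, g x := by
    have h := sum_esymmOn_erase (univ : Finset (Fin (e+2))) e g
    rw [hcard, show e + 2 - e = 2 from by omega] at h
    push_cast at h
    rw [esymm, ← h]
    refine Finset.sum_congr rfl fun i _ => ?_
    have h' := sum_esymmOn_erase (univ.erase i) e g
    rw [hcard_erase i, show e + 1 - e = 1 from by omega] at h'
    push_cast at h'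
    rw [one_mul] at h'
    rw [← h']
    refine Finset.sum_congr rfl fun j hj => ?_
    have hc : ((univ.erase i).erase j).card = e := by
      rw [Finset.card_erase_of_mem hj, hcard_erase i]
      omega
    have h3 := esymmOn_card ((univ.erase i).erase j) g
    rw [hc] at h3
    exact h3
  have hprod_pair : ∀ i : Fin (e+2), ∀ j ∈ univ.erase i,
      A i * A j = (∏ x, g x) * ∏ x ∈ (univ.erase i).erase j, g x := by
    intro i j hj
    have hji : j ≠ i := Finset.ne_of_mem_erase hj
    have hAi : A i = g j * ∏ x ∈ (univ.erase i).erase j, g x :=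
      (Finset.mul_prod_erase _ g hj).symm
    have hPj : (∏ x, g x) = g j * A j :=
      (Finset.mul_prod_erase _ g (mem_univ j)).symm
    rw [hAi, hPj]; ring
  have key : (∑ i, A i)^2 = (∑ i, (A i)^2) + (∏ i, g i) * (2 * esymm e g) := by
    calc (∑ i, A i)^2 = ∑ i, (A i * ∑ j, A j) := by rw [sq, Finset.sum_mul]
      _ = ∑ i, ((A i)^2 + ∑ j ∈ univ.erase i, A i * A j) := by
          refine Finset.sum_congr rfl fun i _ => ?_
          rw [← Finset.add_sum_erase _ A (mem_univ i), mul_add, sq, Finset.mul_sum]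
      _ = (∑ i, (A i)^2) + ∑ i, ∑ j ∈ univ.erase i, A i * A j := by
          rw [Finset.sum_add_distrib]
      _ = (∑ i, (A i)^2) + (∏ i, g i) * (2 * esymm e g) := by
          congr 1
          rw [h2, Finset.mul_sum]
          refine Finset.sum_congr rfl fun i _ => ?_
          rw [Finset.mul_sum]
          exact Finset.sum_congr rfl fun j hj => hprod_pair i j hj
  have CS : (∑ i, A i)^2 ≤ (e+2 : ℝ) * ∑ i, (A i)^2 := by
    have := sq_sum_le_card_mul_sum_sq (s := (univ : Finset (Fin (e+2)))) (f := A)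
    rw [hcard] at this
    push_cast at this
    exact this
  have hidx1 : e + 2 - 2 = e := by omega
  have hidx2 : e + 2 - 1 = e + 1 := by omega
  rw [hidx1, hidx2, hP, hA]
  push_cast
  nlinarith [key, CS]

-- multiset esymm to Fin esymm
lemma list_esymm (l : List ℝ) (j : ℕ) :
    (↑l : Multiset ℝ).esymm j = esymm j (fun i : Fin l.length => l.get i) := by
  have h : ((Finset.univ : Finset (Fin l.length)).val.map l.get) = (↑l : Multiset ℝ) := by
    rw [Fin.univ_val_map]
    exact congrArg (fun x : List ℝ => (↑x : Multiset ℝ)) (List.ofFn_get l)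
  rw [← h, Finset.esymm_map_val]
  rfl

-- real-rooted is preserved by derivative
lemma roots_card_derivative (q : ℝ[X]) (h : Multiset.card q.roots = q.natDegree) :
    Multiset.card (derivative q).roots = (derivative q).natDegree := by
  by_cases h0 : q.natDegree = 0
  · have : derivative q = 0 := by
      rw [Polynomial.eq_C_of_natDegree_eq_zero h0]
      simp
    simp [this]
  · have hlt := Polynomial.natDegree_derivative_lt h0
    have hub := Polynomial.card_roots' (derivative q)
    have hlb := Polynomial.card_roots_le_derivative q
    omega

lemma roots_card_iterate (p : ℝ[X]) (h : Multiset.card p.roots = p.natDegree) (j : ℕ) :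
    Multiset.card (derivative^[j] p).roots = (derivative^[j] p).natDegree := by
  induction j with
  | zero => simpa using h
  | succ i ih =>
    rw [Function.iterate_succ_apply']
    exact roots_card_derivative _ ih

lemma newton_const_id (a u : ℕ) :
    (((a+u+2).choose (a+1) : ℝ))^2 * (((a:ℝ)+2)*((a:ℝ)+1)*(((u+1).descFactorial u : ℝ))^2)
      = (((a+u+2).choose a : ℝ) * ((a+u+2).choose (a+2) : ℝ)) *
        (2*((a:ℝ)+2)^2*(((u+2).descFactorial u : ℝ) * ((u.descFactorial u : ℝ)))) := by
  have hC1 : (((a+u+2).choose (a+1) : ℝ)) = (Nat.factorial (a+u+2) : ℝ) / ((Nat.factorial (a+1) : ℝ) * (Nat.factorial (u+1) : ℝ)) := by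
    rw [Nat.cast_choose ℝ (by omega : a+1 ≤ a+u+2), show a+u+2 - (a+1) = u+1 from by omega]
  have hC2 : (((a+u+2).choose a : ℝ)) = (Nat.factorial (a+u+2) : ℝ) / ((Nat.factorial a : ℝ) * (Nat.factorial (u+2) : ℝ)) := by
    rw [Nat.cast_choose ℝ (by omega : a ≤ a+u+2), show a+u+2 - a = u+2 from by omega]
  have hC3 : (((a+u+2).choose (a+2) : ℝ)) = (Nat.factorial (a+u+2) : ℝ) / ((Nat.factorial (a+2) : ℝ) * (Nat.factorial u : ℝ)) := by
    rw [Nat.cast_choose ℝ (by omega : a+2 ≤ a+u+2), show a+u+2 - (a+2) = u from by omega]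
  have hd0 : (u.descFactorial u : ℝ) = (Nat.factorial u : ℝ) := by
    rw [Nat.descFactorial_self]
  have hd1 : ((u+1).descFactorial u : ℝ) = (Nat.factorial (u+1) : ℝ) := by
    rw [Nat.descFactorial_eq_factorial_mul_choose, Nat.choose_succ_self_right]
    push_cast [Nat.factorial_succ]
    ring
  have hd2 : ((u+2).descFactorial u : ℝ) = (Nat.factorial (u+2) : ℝ) / 2 := by
    have h1 : (u+2).descFactorial u * 2 = Nat.factorial (u+2) := by
      have hsym : (u+2).choose u = (u+2).choose 2 := by
        rw [← Nat.choose_symm (by omega : 2 ≤ u+2), show u+2-2 = u from by omega]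
      rw [Nat.descFactorial_eq_factorial_mul_choose, hsym]
      have h2 := Nat.choose_mul_factorial_mul_factorial (by omega : 2 ≤ u+2)
      rw [show u+2-2 = u from by omega] at h2
      calc Nat.factorial u * ((u+2).choose 2) * 2 = (u+2).choose 2 * 2 * Nat.factorial u := by ring
        _ = (u+2).choose 2 * Nat.factorial 2 * Nat.factorial u := by norm_num [Nat.factorial]
        _ = Nat.factorial (u+2) := h2
    have := congrArg (fun x : ℕ => (x : ℝ)) h1
    push_cast at this
    linarith
  have f1 : (Nat.factorial (a+1) : ℝ) = ((a:ℝ)+1) * (Nat.factorial a : ℝ) := by push_cast [Nat.factorial_succ]; ring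
  have f2 : (Nat.factorial (a+2) : ℝ) = ((a:ℝ)+2)*((a:ℝ)+1) * (Nat.factorial a : ℝ) := by
    rw [show a+2 = (a+1)+1 from rfl, Nat.factorial_succ]
    push_cast [Nat.factorial_succ]; ring
  have g1 : (Nat.factorial (u+1) : ℝ) = ((u:ℝ)+1) * (Nat.factorial u : ℝ) := by push_cast [Nat.factorial_succ]; ring
  have g2 : (Nat.factorial (u+2) : ℝ) = ((u:ℝ)+2)*((u:ℝ)+1) * (Nat.factorial u : ℝ) := by
    rw [show u+2 = (u+1)+1 from rfl, Nat.factorial_succ]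
    push_cast [Nat.factorial_succ]; ring
  have ha0 : (Nat.factorial a : ℝ) ≠ 0 := Nat.cast_ne_zero.mpr (Nat.factorial_ne_zero a)
  have hu0 : (Nat.factorial u : ℝ) ≠ 0 := Nat.cast_ne_zero.mpr (Nat.factorial_ne_zero u)
  have ha1 : ((a:ℝ)+1) ≠ 0 := by positivity
  have ha2 : ((a:ℝ)+2) ≠ 0 := by positivity
  have hu1 : ((u:ℝ)+1) ≠ 0 := by positivity
  have hu2 : ((u:ℝ)+2) ≠ 0 := by positivity
  rw [hC1, hC2, hC3, hd0, hd1, hd2, f1, f2, g1, g2]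
  field_simp

lemma esymm_zero_eq_one {n : ℕ} (lam : Fin n → ℝ) : esymm 0 lam = 1 := by
  rw [esymm, esymmOn, Finset.powersetCard_zero, Finset.sum_singleton, Finset.prod_empty]

lemma esymm_eq_zero_of_gt {n j : ℕ} (lam : Fin n → ℝ) (h : n < j) : esymm j lam = 0 := by
  rw [esymm, esymmOn, Finset.powersetCard_eq_empty.mpr (by simpa using h), Finset.sum_empty]

lemma bridge {A B A' B' x y : ℝ} (hA : 0 < A) (hA' : 0 ≤ A') (hid : A' * B = B' * A)
    (h : A * x ≤ B * y) : A' * x ≤ B' * y := by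
  have h2 := mul_le_mul_of_nonneg_left h hA'
  have h3 : A * (A' * x) ≤ A * (B' * y) := by
    calc A * (A' * x) = A' * (A * x) := by ring
      _ ≤ A' * (B * y) := h2
      _ = (A' * B) * y := by ring
      _ = (B' * A) * y := by rw [hid]
      _ = A * (B' * y) := by ring
  exact le_of_mul_le_mul_left h3 hA

theorem newton_ineq (n m : ℕ) (hm : 1 ≤ m) (lam : Fin n → ℝ) :
    ((n.choose m : ℝ))^2 * (esymm (m-1) lam * esymm (m+1) lam)
      ≤ ((n.choose (m-1) : ℝ) * (n.choose (m+1) : ℝ)) * (esymm m lam)^2 := by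
  by_cases hmn : n ≤ m
  · rw [esymm_eq_zero_of_gt lam (by omega : n < m+1)]
    have h2 : (0:ℝ) ≤ (esymm m lam)^2 := sq_nonneg _
    have h3 : (0:ℝ) ≤ ((n.choose (m-1) : ℝ) * (n.choose (m+1) : ℝ)) := by positivity
    nlinarith
  · push_neg at hmn
    obtain ⟨a, rfl⟩ : ∃ a, m = a + 1 := ⟨m-1, by omega⟩
    obtain ⟨u, rfl⟩ : ∃ u, n = a + u + 2 := ⟨n-a-2, by omega⟩
    rw [show a+1-1 = a from by omega, show a+1+1 = a+2 from rfl]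
    set lamP : Polynomial ℝ := ∏ i : Fin (a+u+2), (X + C (lam i)) with hp_def
    have hmonic : lamP.Monic := monic_prod_of_monic _ _ (fun i _ => monic_X_add_C (lam i))
    have hpne : lamP ≠ 0 := hmonic.ne_zero
    have hpdeg : lamP.natDegree = a+u+2 := by
      rw [hp_def, natDegree_prod _ _ (fun i _ => (monic_X_add_C (lam i)).ne_zero)]
      simp [natDegree_X_add_C]
    have hrootsXC : ∀ c : ℝ, (X + C c).roots = {-c} := by
      intro c
      rw [show (X + C c : Polynomial ℝ) = X - C (-c) from by rw [map_neg, sub_neg_eq_add]]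
      exact roots_X_sub_C _
    have hproots : Multiset.card lamP.roots = a+u+2 := by
      rw [hp_def, Polynomial.roots_prod _ _ (by rw [← hp_def]; exact hpne)]
      simp [hrootsXC, Multiset.card_bind]
    have hcoeff : ∀ i, i ≤ a+u+2 → lamP.coeff i = esymm (a+u+2-i) lam := by
      intro i hi
      have h := Finset.prod_X_add_C_coeff (univ : Finset (Fin (a+u+2))) lam
        (by simpa using hi)
      simp only [Finset.card_univ, Fintype.card_fin] at h
      rw [hp_def, h, esymm, esymmOn]
    set q := derivative^[u] lamP with hq_def
    have hqcoeff : ∀ i, q.coeff i = (((i+u).descFactorial u : ℕ) : ℝ) * lamP.coeff (i+u) := by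
      intro i
      rw [hq_def, Polynomial.coeff_iterate_derivative, nsmul_eq_mul]
    have hp_top : lamP.coeff (a+2+u) = 1 := by
      rw [show a+2+u = a+u+2 from by omega, ← hpdeg]
      exact hmonic.coeff_natDegree
    have hqtop : q.coeff (a+2) = (((a+u+2).descFactorial u : ℕ) : ℝ) := by
      rw [hqcoeff, hp_top, mul_one, show a+2+u = a+u+2 from by omega]
    have hdpos : (0:ℝ) < (((a+u+2).descFactorial u : ℕ) : ℝ) := by
      have : 0 < (a+u+2).descFactorial u := by
        rw [Nat.descFactorial_eq_factorial_mul_choose]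
        exact Nat.mul_pos (Nat.factorial_pos u) (Nat.choose_pos (by omega))
      exact_mod_cast this
    have hqdeg : q.natDegree = a+2 := by
      apply le_antisymm
      · have h := Polynomial.natDegree_iterate_derivative lamP u
        rw [hpdeg] at h
        exact h.trans (by omega)
      · exact Polynomial.le_natDegree_of_ne_zero (by rw [hqtop]; exact ne_of_gt hdpos)
    have hqroots : Multiset.card q.roots = a+2 := by
      have h := roots_card_iterate lamP (by rw [hproots, hpdeg]) u
      rw [← hq_def] at h
      rw [h, hqdeg]
    have hsplit : Splits q :=
      (Polynomial.splits_iff_card_roots).mpr (by rw [hqroots, hqdeg])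
    have hfact := hsplit.eq_prod_roots
    set ν : Multiset ℝ := q.roots.map (fun x => -x) with hnu_def
    have hnucard : Multiset.card ν = a+2 := by rw [hnu_def, Multiset.card_map, hqroots]
    have hmapeq : (ν.map fun x => X + C x) = q.roots.map fun x => X - C x := by
      rw [hnu_def, Multiset.map_map]
      apply Multiset.map_congr rfl
      intro x _
      simp [sub_eq_add_neg]
    have hqcoeff2 : ∀ i, i ≤ a+2 → q.coeff i = q.leadingCoeff * ν.esymm (a+2-i) := by
      intro i hi
      conv_lhs => rw [hfact]
      rw [← hmapeq, Polynomial.coeff_C_mul,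
        Multiset.prod_X_add_C_coeff ν (by rw [hnucard]; exact hi), hnucard]
    -- the three coefficient relations
    have rel : ∀ i, i ≤ 2 →
        (((i+u).descFactorial u : ℕ) : ℝ) * esymm (a+2-i) lam
          = q.leadingCoeff * ν.esymm (a+2-i) := by
      intro i hi
      have h1 := hqcoeff i
      rw [hcoeff (i+u) (by omega), show a+u+2-(i+u) = a+2-i from by omega] at h1
      have h2 := hqcoeff2 i (by omega)
      rw [← h1, h2]
    have rel0 := rel 0 (by omega)
    have rel1 := rel 1 (by omega)
    have rel2 := rel 2 (by omega)
    rw [show a+2-0 = a+2 from by omega] at rel0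
    rw [show a+2-1 = a+1 from by omega] at rel1
    rw [show a+2-2 = a from by omega] at rel2
    rw [show (0:ℕ)+u = u from by omega] at rel0
    rw [show (1:ℕ)+u = u+1 from by omega] at rel1
    rw [show (2:ℕ)+u = u+2 from by omega] at rel2
    -- Lemma A via list conversion
    set l := ν.toList with hl_def
    have hnul : (↑l : Multiset ℝ) = ν := Multiset.coe_toList ν
    have hlen : l.length = a+2 := by rw [hl_def, Multiset.length_toList, hnucard]
    have hesym : ∀ j, ν.esymm j = esymm j (fun i : Fin l.length => l.get i) := by
      intro j
      rw [← hnul, list_esymm]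
    have lemA := lemmaA l.length (by omega) (fun i : Fin l.length => l.get i)
    have lemA2 : 2*((l.length : ℕ):ℝ)^2*(ν.esymm (l.length-2) * ν.esymm l.length)
        ≤ ((l.length : ℕ):ℝ)*(((l.length : ℕ):ℝ)-1)*(ν.esymm (l.length-1))^2 := by
      rw [hesym, hesym, hesym]
      exact lemA
    rw [hlen, show a+2-2 = a from by omega, show a+2-1 = a+1 from by omega] at lemA2
    push_cast at lemA2
    -- multiply by L^2
    set L := q.leadingCoeff with hL_def
    have H : (2*((a:ℝ)+2)^2*((((u+2).descFactorial u : ℕ):ℝ) * ((u.descFactorial u : ℕ):ℝ)))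
        * (esymm a lam * esymm (a+2) lam)
        ≤ (((a:ℝ)+2)*((a:ℝ)+1)*((((u+1).descFactorial u : ℕ):ℝ))^2) * (esymm (a+1) lam)^2 := by
      have hmul := mul_le_mul_of_nonneg_left lemA2 (sq_nonneg L)
      calc (2*((a:ℝ)+2)^2*((((u+2).descFactorial u : ℕ):ℝ) * ((u.descFactorial u : ℕ):ℝ)))
            * (esymm a lam * esymm (a+2) lam)
          = 2*((a:ℝ)+2)^2*(((((u+2).descFactorial u : ℕ):ℝ) * esymm a lam)
              * ((((u.descFactorial u : ℕ):ℝ) * esymm (a+2) lam))) := by ring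
        _ = 2*((a:ℝ)+2)^2*((L * ν.esymm a) * (L * ν.esymm (a+2))) := by rw [rel2, rel0]
        _ = L^2 * (2*((a:ℝ)+2)^2*(ν.esymm a * ν.esymm (a+2))) := by ring
        _ ≤ L^2 * (((a:ℝ)+2)*(((a:ℝ)+2)-1)*(ν.esymm (a+1))^2) := hmul
        _ = ((a:ℝ)+2)*((a:ℝ)+1)*(L * ν.esymm (a+1))^2 := by ring
        _ = ((a:ℝ)+2)*((a:ℝ)+1)*((((u+1).descFactorial u : ℕ):ℝ) * esymm (a+1) lam)^2 := by
            rw [rel1]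
        _ = (((a:ℝ)+2)*((a:ℝ)+1)*((((u+1).descFactorial u : ℕ):ℝ))^2) * (esymm (a+1) lam)^2 := by
            ring
    -- bridge to choose constants
    have hApos : (0:ℝ) < 2*((a:ℝ)+2)^2
        *((((u+2).descFactorial u : ℕ):ℝ) * ((u.descFactorial u : ℕ):ℝ)) := by
      have h1 : 0 < (u+2).descFactorial u := by
        rw [Nat.descFactorial_eq_factorial_mul_choose]
        exact Nat.mul_pos (Nat.factorial_pos u) (Nat.choose_pos (by omega))
      have h2 : 0 < u.descFactorial u := by
        rw [Nat.descFactorial_self]; exact Nat.factorial_pos u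
      have h1' : (0:ℝ) < (((u+2).descFactorial u : ℕ):ℝ) := by exact_mod_cast h1
      have h2' : (0:ℝ) < ((u.descFactorial u : ℕ):ℝ) := by exact_mod_cast h2
      positivity
    exact bridge hApos (sq_nonneg _) (newton_const_id a u) H

/-- Geometric-window comparison for a nonincreasing positive sequence. -/
lemma geom_window (t : ℕ → ℝ) (k l r s : ℕ)
    (htpos : ∀ i, i + 1 ≤ k → 0 < t i)
    (hmono : ∀ i j, i ≤ j → j + 1 ≤ k → t j ≤ t i)
    (hkl : l < k) (hrs : s < r) (hkr : r ≤ k) (hls : s ≤ l) :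
    (∏ i ∈ Finset.Ico l k, t i)^(r-s) ≤ (∏ i ∈ Finset.Ico s r, t i)^(k-l) := by
  set P : ℕ → ℕ → ℝ := fun a b => ∏ i ∈ Finset.Ico a b, t i with hP_def
  have hPpos : ∀ a b, b ≤ k → 0 < P a b := by
    intro a b hb
    apply Finset.prod_pos
    intro i hi
    rw [Finset.mem_Ico] at hi
    exact htpos i (by omega)
  have hext : ∀ a b, a ≤ b → b + 1 ≤ k → (P a (b+1))^(b-a) ≤ (P a b)^(b+1-a) := by
    intro a b hab hbk
    have h1 : t b ^ (b-a) ≤ P a b := by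
      calc t b ^ (b-a) = ∏ _i ∈ Finset.Ico a b, t b := by
            rw [Finset.prod_const, Nat.card_Ico]
        _ ≤ ∏ i ∈ Finset.Ico a b, t i := by
            apply Finset.prod_le_prod
            · intro i _; exact le_of_lt (htpos b hbk)
            · intro i hi; rw [Finset.mem_Ico] at hi; exact hmono i b (by omega) hbk
    have h2 : P a (b+1) = P a b * t b := Finset.prod_Ico_succ_top hab _
    rw [h2, mul_pow, show b+1-a = (b-a)+1 from by omega, pow_succ]
    exact mul_le_mul_of_nonneg_left h1 (pow_nonneg (le_of_lt (hPpos a b (by omega))) _)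
  have hshrink : ∀ a b, a < b → b ≤ k → (P (a+1) b)^(b-a) ≤ (P a b)^(b-a-1) := by
    intro a b hab hbk
    have h1 : P (a+1) b ≤ t a ^ (b-a-1) := by
      calc P (a+1) b ≤ ∏ _i ∈ Finset.Ico (a+1) b, t a := by
            apply Finset.prod_le_prod
            · intro i hi; rw [Finset.mem_Ico] at hi; exact le_of_lt (htpos i (by omega))
            · intro i hi; rw [Finset.mem_Ico] at hi; exact hmono a i (by omega) (by omega)
        _ = t a ^ (b-a-1) := by
            rw [Finset.prod_const, Nat.card_Ico, Nat.sub_sub]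
    have h2 : P a b = t a * P (a+1) b := Finset.prod_eq_prod_Ico_succ_bot hab _
    rw [h2, mul_pow, show b-a = (b-a-1)+1 from by omega, pow_succ]
    have h3 : (0:ℝ) ≤ (P (a+1) b)^(b-a-1) := pow_nonneg (le_of_lt (hPpos _ _ hbk)) _
    calc (P (a+1) b)^(b-a-1) * P (a+1) b ≤ (P (a+1) b)^(b-a-1) * t a ^ (b-a-1) :=
          mul_le_mul_of_nonneg_left h1 h3
      _ = (t a)^(b-a-1) * (P (a+1) b)^(b-a-1) := by ring
  have step1 : ∀ b, r ≤ b → b ≤ k → (P s b)^(r-s) ≤ (P s r)^(b-s) := by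
    intro b hrb hbk
    induction b, hrb using Nat.le_induction with
    | base => exact le_refl _
    | succ b hrb ih =>
      have hA := hext s b (by omega) (by omega)
      have hIH := ih (by omega)
      have h1 : ((P s (b+1))^(r-s))^(b-s) ≤ ((P s r)^(b+1-s))^(b-s) := by
        calc ((P s (b+1))^(r-s))^(b-s) = ((P s (b+1))^(b-s))^(r-s) := by
              rw [← pow_mul, ← pow_mul, Nat.mul_comm]
          _ ≤ ((P s b)^(b+1-s))^(r-s) :=
              pow_le_pow_left₀ (pow_nonneg (hPpos _ _ (by omega)).le _) hA _
          _ = ((P s b)^(r-s))^(b+1-s) := by rw [← pow_mul, ← pow_mul, Nat.mul_comm]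
          _ ≤ ((P s r)^(b-s))^(b+1-s) :=
              pow_le_pow_left₀ (pow_nonneg (hPpos _ _ (by omega)).le _) hIH _
          _ = ((P s r)^(b+1-s))^(b-s) := by rw [← pow_mul, ← pow_mul, Nat.mul_comm]
      exact le_of_pow_le_pow_left₀ (by omega : b - s ≠ 0)
        (pow_nonneg (hPpos _ _ (by omega)).le _) h1
  have step2 : ∀ a, s ≤ a → a ≤ l → (P a k)^(k-s) ≤ (P s k)^(k-a) := by
    intro a hsa hal
    induction a, hsa using Nat.le_induction with
    | base => exact le_refl _
    | succ a hsa ih =>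
      have hS := hshrink a k (by omega) le_rfl
      have hIH := ih (by omega)
      have h1 : ((P (a+1) k)^(k-s))^(k-a) ≤ ((P s k)^(k-a-1))^(k-a) := by
        calc ((P (a+1) k)^(k-s))^(k-a) = ((P (a+1) k)^(k-a))^(k-s) := by
              rw [← pow_mul, ← pow_mul, Nat.mul_comm]
          _ ≤ ((P a k)^(k-a-1))^(k-s) :=
              pow_le_pow_left₀ (pow_nonneg (hPpos _ _ le_rfl).le _) hS _
          _ = ((P a k)^(k-s))^(k-a-1) := by rw [← pow_mul, ← pow_mul, Nat.mul_comm]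
          _ ≤ ((P s k)^(k-a))^(k-a-1) :=
              pow_le_pow_left₀ (pow_nonneg (hPpos _ _ le_rfl).le _) hIH _
          _ = ((P s k)^(k-a-1))^(k-a) := by rw [← pow_mul, ← pow_mul, Nat.mul_comm]
      have h2 := le_of_pow_le_pow_left₀ (by omega : k - a ≠ 0)
        (pow_nonneg (hPpos _ _ le_rfl).le _) h1
      rw [show k-(a+1) = k-a-1 from by omega]
      exact h2
  have h1 := step2 l hls (le_refl l)
  have h2 := step1 k hkr (le_refl k)
  have h3 : ((P l k)^(r-s))^(k-s) ≤ ((P s r)^(k-l))^(k-s) := by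
    calc ((P l k)^(r-s))^(k-s) = ((P l k)^(k-s))^(r-s) := by
          rw [← pow_mul, ← pow_mul, Nat.mul_comm]
      _ ≤ ((P s k)^(k-l))^(r-s) :=
          pow_le_pow_left₀ (pow_nonneg (hPpos _ _ le_rfl).le _) h1 _
      _ = ((P s k)^(r-s))^(k-l) := by rw [← pow_mul, ← pow_mul, Nat.mul_comm]
      _ ≤ ((P s r)^(k-s))^(k-l) :=
          pow_le_pow_left₀ (pow_nonneg (hPpos _ _ le_rfl).le _) h2 _
      _ = ((P s r)^(k-l))^(k-s) := by rw [← pow_mul, ← pow_mul, Nat.mul_comm]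
  exact le_of_pow_le_pow_left₀ (by omega : k - s ≠ 0)
    (pow_nonneg (hPpos _ _ (le_trans hkr le_rfl)).le _) h3


theorem generalized_newton_maclaurin (n k l r s : ℕ)
    (lam : Fin n → ℝ) (hGamma : lam ∈ GardingCone n k)
    (hkl : k > l) (hrs : r > s) (hkr : k ≥ r) (hls : l ≥ s) :
    ((esymm k lam / (n.choose k : ℝ)) / (esymm l lam / (n.choose l : ℝ)))
        ^ ((1 : ℝ) / ((k : ℝ) - (l : ℝ))) ≤
      ((esymm r lam / (n.choose r : ℝ)) / (esymm s lam / (n.choose s : ℝ)))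
        ^ ((1 : ℝ) / ((r : ℝ) - (s : ℝ))) := by
  have hk1 : 1 ≤ k := by omega
  have hkn : k ≤ n := by
    by_contra h
    have h0 := hGamma k hk1 le_rfl
    rw [esymm_eq_zero_of_gt lam (by omega)] at h0
    exact lt_irrefl 0 h0
  set E : ℕ → ℝ := fun m => esymm m lam / (n.choose m : ℝ) with hE_def
  have hEpos : ∀ m, m ≤ k → 0 < E m := by
    intro m hm
    rcases Nat.eq_zero_or_pos m with h|h
    · subst h
      rw [hE_def]
      simp [esymm_zero_eq_one]
    · have h1 := hGamma m h hm
      have h2 : 0 < (n.choose m : ℝ) := by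
        exact_mod_cast Nat.choose_pos (le_trans hm hkn)
      rw [hE_def]
      exact div_pos h1 h2
  have hlogc : ∀ a, a + 2 ≤ k → E a * E (a+2) ≤ E (a+1)^2 := by
    intro a hak
    have hN := newton_ineq n (a+1) (by omega) lam
    rw [show a+1-1 = a from by omega, show a+1+1 = a+2 from rfl] at hN
    have c1 : 0 < (n.choose (a+1) : ℝ) := by
      exact_mod_cast Nat.choose_pos (by omega)
    have c0 : 0 < (n.choose a : ℝ) := by
      exact_mod_cast Nat.choose_pos (by omega)
    have c2 : 0 < (n.choose (a+2) : ℝ) := by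
      exact_mod_cast Nat.choose_pos (by omega)
    rw [hE_def]
    simp only []
    rw [div_mul_div_comm, div_pow, div_le_div_iff₀ (by positivity) (by positivity)]
    nlinarith [hN]
  set t : ℕ → ℝ := fun i => E (i+1) / E i with ht_def
  have htpos : ∀ i, i + 1 ≤ k → 0 < t i := by
    intro i hi
    rw [ht_def]
    exact div_pos (hEpos _ hi) (hEpos _ (by omega))
  have hstep : ∀ i, i + 2 ≤ k → t (i+1) ≤ t i := by
    intro i hi
    have h := hlogc i hi
    rw [ht_def]
    simp only []
    rw [div_le_div_iff₀ (hEpos (i+1) (by omega)) (hEpos i (by omega))]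
    nlinarith [h]
  have hmono : ∀ i j, i ≤ j → j + 1 ≤ k → t j ≤ t i := by
    intro i j hij hjk
    induction j, hij using Nat.le_induction with
    | base => exact le_refl _
    | succ j hij ih => exact le_trans (hstep j (by omega)) (ih (by omega))
  have hPE : ∀ a b, a ≤ b → b ≤ k → E b = E a * ∏ i ∈ Finset.Ico a b, t i := by
    intro a b hab hbk
    induction b, hab using Nat.le_induction with
    | base => simp [Finset.Ico_self]
    | succ b hab ih =>
      rw [Finset.prod_Ico_succ_top hab, ← mul_assoc, ← ih (by omega), ht_def]
      simp only []
      rw [mul_comm (E b), div_mul_cancel₀]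
      exact ne_of_gt (hEpos b (by omega))
  have hfin := geom_window t k l r s htpos hmono hkl hrs hkr hls
  -- identify ratios
  have hXP : (esymm k lam / (n.choose k : ℝ)) / (esymm l lam / (n.choose l : ℝ))
      = ∏ i ∈ Finset.Ico l k, t i := by
    have h1 : esymm k lam / (n.choose k : ℝ) = E k := by rw [hE_def]
    have h2 : esymm l lam / (n.choose l : ℝ) = E l := by rw [hE_def]
    rw [h1, h2, hPE l k (le_of_lt hkl) le_rfl, mul_comm, mul_div_assoc,
      div_self (ne_of_gt (hEpos l (by omega))), mul_one]
  have hYP : (esymm r lam / (n.choose r : ℝ)) / (esymm s lam / (n.choose s : ℝ))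
      = ∏ i ∈ Finset.Ico s r, t i := by
    have h1 : esymm r lam / (n.choose r : ℝ) = E r := by rw [hE_def]
    have h2 : esymm s lam / (n.choose s : ℝ) = E s := by rw [hE_def]
    rw [h1, h2, hPE s r (le_of_lt hrs) (le_trans hkr le_rfl), mul_comm, mul_div_assoc,
      div_self (ne_of_gt (hEpos s (by omega))), mul_one]
  rw [hXP, hYP]
  set A := ∏ i ∈ Finset.Ico l k, t i with hA_def
  set B := ∏ i ∈ Finset.Ico s r, t i with hB_def
  have hA : 0 < A := by
    rw [hA_def]
    apply Finset.prod_pos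
    intro i hi
    rw [Finset.mem_Ico] at hi
    exact htpos i (by omega)
  have hB : 0 < B := by
    rw [hB_def]
    apply Finset.prod_pos
    intro i hi
    rw [Finset.mem_Ico] at hi
    exact htpos i (by omega)
  have hK : (0:ℝ) < (k:ℝ) - l := by
    have : (l:ℝ) < k := by exact_mod_cast hkl
    linarith
  have hR : (0:ℝ) < (r:ℝ) - s := by
    have : (s:ℝ) < r := by exact_mod_cast hrs
    linarith
  have key : A ^ (((r-s : ℕ)):ℝ) ≤ B ^ (((k-l : ℕ)):ℝ) := by
    rw [Real.rpow_natCast, Real.rpow_natCast]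
    exact hfin
  have e1 : (1:ℝ)/((k:ℝ)-(l:ℝ)) = ((r-s:ℕ):ℝ) * ((1:ℝ)/((((k:ℝ)-l))*((r:ℝ)-s))) := by
    rw [Nat.cast_sub (le_of_lt hrs)]
    field_simp
  have e2 : (1:ℝ)/((r:ℝ)-(s:ℝ)) = ((k-l:ℕ):ℝ) * ((1:ℝ)/((((k:ℝ)-l))*((r:ℝ)-s))) := by
    rw [Nat.cast_sub (le_of_lt hkl)]
    field_simp
    try ring
  calc A ^ ((1:ℝ)/((k:ℝ)-(l:ℝ)))
      = (A ^ (((r-s:ℕ)):ℝ)) ^ ((1:ℝ)/((((k:ℝ)-l))*((r:ℝ)-s))) := by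
        rw [e1, Real.rpow_mul hA.le]
    _ ≤ (B ^ (((k-l:ℕ)):ℝ)) ^ ((1:ℝ)/((((k:ℝ)-l))*((r:ℝ)-s))) := by
        apply Real.rpow_le_rpow (Real.rpow_nonneg hA.le _) key
        positivity
    _ = B ^ ((1:ℝ)/((r:ℝ)-(s:ℝ))) := by
        rw [e2]
        exact (Real.rpow_mul hB.le _ _).symm
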